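/- Let 𝓘 = (I₁,…,I_k) be a geometric chain of k ideals in the root poset of Φ, and define I̲_{k+1} = ⋃_{i+j=k+1} ((I_i + I_j) ∩ Φ⁺) ∪ I_k ∪ S and I̲_i = I_i for i ∈ [k]. Then 𝓘̲ = (I̲₁,…,I̲_{k+1}) is a positive geometric chain of k+1 ideals in the root poset of Φ. -/

import Mathlib

open scoped Pointwise RealInnerProductSpace

/-- A crystallographic root system together with a choice of simple system. -/
structure RootSystemData (V : Type*) [NormedAddCommGroup V] [InnerProductSpace ℝ V] where
  Φ : Set V
  S : Set V
  finite : Φ.Finite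
  ne_zero : ∀ α ∈ Φ, α ≠ 0
  reflect_mem : ∀ α ∈ Φ, ∀ β ∈ Φ, β - (2 * (inner ℝ β α : ℝ) / (inner ℝ α α : ℝ)) • α ∈ Φ
  crystal : ∀ α ∈ Φ, ∀ β ∈ Φ, ∃ m : ℤ, 2 * (inner ℝ β α : ℝ) / (inner ℝ α α : ℝ) = (m : ℝ)
  reduced : ∀ α ∈ Φ, ∀ t : ℝ, t • α ∈ Φ → t = 1 ∨ t = -1
  S_sub : S ⊆ Φ
  S_indep : LinearIndependent ℝ ((↑) : S → V)
  decomp : ∀ α ∈ Φ, α ∈ AddSubmonoid.closure S ∨ -α ∈ AddSubmonoid.closure S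

namespace RootSystemData

variable {V : Type*} [NormedAddCommGroup V] [InnerProductSpace ℝ V] (D : RootSystemData V)

/-- The positive roots. -/
def pos : Set V := {α ∈ D.Φ | α ∈ AddSubmonoid.closure D.S}

/-- The root poset order: `α ≤ β` iff `β - α` is a nonnegative integer combination
of simple roots. -/
def rle (α β : V) : Prop := β - α ∈ AddSubmonoid.closure D.S

/-- An (order) ideal of the root poset. -/
def IsIdeal (I : Set V) : Prop :=
  I ⊆ D.pos ∧ ∀ α ∈ I, ∀ β ∈ D.pos, D.rle β α → β ∈ I

/-- The order filters complementary to a chain of ideals, with the conventions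
`J 0 = Φ⁺` (as `I 0 = ∅`) and `J i = J k` for `i > k`. -/
def Jf (k : ℕ) (I : ℕ → Set V) (i : ℕ) : Set V := D.pos \ I (min i k)

/-- A geometric chain of `k` ideals in the root poset. -/
structure IsGeomChain (k : ℕ) (I : ℕ → Set V) : Prop where
  zero : I 0 = ∅
  ideal : ∀ i, 1 ≤ i → i ≤ k → D.IsIdeal (I i)
  mono : ∀ i j, i ≤ j → j ≤ k → I i ⊆ I j
  geomI : ∀ i j, i + j ≤ k → (I i + I j) ∩ D.pos ⊆ I (i + j)
  geomJ : ∀ i j, (D.Jf k I i + D.Jf k I j) ∩ D.pos ⊆ D.Jf k I (i + j)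

/-- A chain of ideals is positive if `S ⊆ I k`. -/
def IsPositiveChain (k : ℕ) (I : ℕ → Set V) : Prop := D.S ⊆ I k

/-- The set of values `r₁ + … + r_m` over all expressions `α = α₁ + … + α_m` with
`α_i ∈ I (r i)` and `1 ≤ r i ≤ k`; its least element (when it exists) is `r_α(𝓘)`. -/
def rVals (_D : RootSystemData V) (k : ℕ) (I : ℕ → Set V) (α : V) : Set ℕ :=
  {N | ∃ m : ℕ, ∃ a : Fin m → V, ∃ r : Fin m → ℕ,
    (∀ i, 1 ≤ r i ∧ r i ≤ k ∧ a i ∈ I (r i)) ∧ (∑ i, a i) = α ∧ (∑ i, r i) = N}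

/-- The extension `𝓘̲` of a geometric chain of `k` ideals to a chain of `k+1` ideals,
with `I̲_{k+1} = ⋃_{i+j=k+1} ((I_i + I_j) ∩ Φ⁺) ∪ I_k ∪ S`. -/
def Ibar (k : ℕ) (I : ℕ → Set V) : ℕ → Set V := fun i =>
  if i ≤ k then I i
  else (⋃ (p : ℕ × ℕ) (_ : p.1 + p.2 = k + 1), (I p.1 + I p.2) ∩ D.pos) ∪ I k ∪ D.S

/-- `α` is a rank `r` indecomposable element of the chain of ideals `I`. -/
def IsIndec (k : ℕ) (I : ℕ → Set V) (r : ℕ) (α : V) : Prop :=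
  α ∈ I r ∧ IsLeast (D.rVals k I α) r ∧
  (∀ i j, i + j = r → α ∉ I i + I j) ∧
  (∀ β ∈ D.pos, ∀ t, t ≤ k → IsLeast (D.rVals k I (α + β)) t → β ∈ I (t - r))

/-- The complement of the `k`-Catalan arrangement of `Φ`. -/
def catComp (k : ℕ) : Set V :=
  {x | ∀ α ∈ D.Φ, ∀ r : ℕ, r ≤ k → (inner ℝ x α : ℝ) ≠ (r : ℝ)}

/-- A region of the `k`-Catalan arrangement: a connected component of the complement. -/
def IsRegion (k : ℕ) (R : Set V) : Prop :=
  ∃ x ∈ D.catComp k, R = connectedComponentIn (D.catComp k) x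

/-- A dominant region of the `k`-Catalan arrangement. -/
def IsDomRegion (k : ℕ) (R : Set V) : Prop :=
  D.IsRegion k R ∧ ∀ x ∈ R, ∀ α ∈ D.pos, 0 < (inner ℝ x α : ℝ)

/-- The complement of the affine Coxeter arrangement of `Φ`. -/
def affComp : Set V := {x | ∀ α ∈ D.Φ, ∀ r : ℤ, (inner ℝ x α : ℝ) ≠ (r : ℝ)}

/-- An alcove: a connected component of the complement of the affine Coxeter arrangement. -/
def IsAlcove (A : Set V) : Prop :=
  ∃ x ∈ D.affComp, A = connectedComponentIn D.affComp x

/-- The hyperplane `H_α^r` supports a facet of `R`. -/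
def IsWall (_D : RootSystemData V) (R : Set V) (α : V) (r : ℝ) : Prop :=
  ∃ x, (inner ℝ x α : ℝ) = r ∧ ∃ ε > 0, ∀ y, (inner ℝ y α : ℝ) = r → dist y x < ε → y ∈ closure R

/-- `H_α^r` is a ceiling of the dominant region (or alcove) `R`: a wall not through
the origin with `R` on the same side as the origin. -/
def IsCeiling (R : Set V) (α : V) (r : ℝ) : Prop :=
  D.IsWall R α r ∧ 0 < r ∧ ∀ x ∈ R, (inner ℝ x α : ℝ) < r

/-- `H_α^r` is a floor of the dominant region (or alcove) `R`: a wall not through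
the origin separating `R` from the origin. -/
def IsFloor (R : Set V) (α : V) (r : ℝ) : Prop :=
  D.IsWall R α r ∧ 0 < r ∧ ∀ x ∈ R, r < (inner ℝ x α : ℝ)

/-- The chain of ideals `θ(R)` associated to a dominant region `R`. -/
def theta (R : Set V) : ℕ → Set V := fun i =>
  {α ∈ D.pos | ∀ x ∈ R, (inner ℝ x α : ℝ) < (i : ℝ)}

/-- `B` is the maximal alcove of the (bounded) region corresponding to the positive chain
of ideals `I`, i.e. the alcove with `r(B,α) = r_α(𝓘)` for all positive roots `α`. -/
def IsMaxAlcoveOf (k : ℕ) (I : ℕ → Set V) (B : Set V) : Prop :=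
  D.IsAlcove B ∧ ∀ α ∈ D.pos, ∃ r : ℕ, IsLeast (D.rVals k I α) r ∧
    ∀ x ∈ B, ((r : ℝ) - 1 < (inner ℝ x α : ℝ) ∧ (inner ℝ x α : ℝ) < (r : ℝ))

/-- The root system `Φ` is irreducible. -/
def Irred : Prop :=
  ∀ Φ₁ Φ₂ : Set V, Φ₁ ∪ Φ₂ = D.Φ → (∀ a ∈ Φ₁, ∀ b ∈ Φ₂, (inner ℝ a b : ℝ) = 0) →
    Φ₁ = ∅ ∨ Φ₂ = ∅

end RootSystemData


section Aux

namespace RootSystemData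

variable {V : Type*} [NormedAddCommGroup V] [InnerProductSpace ℝ V]

lemma inner_self_pos' {x : V} (hx : x ≠ 0) : (0:ℝ) < inner ℝ x x :=
  lt_of_le_of_ne real_inner_self_nonneg (Ne.symm (inner_self_ne_zero.mpr hx))

lemma mem_pos_iff (D : RootSystemData V) {α : V} :
    α ∈ D.pos ↔ α ∈ D.Φ ∧ α ∈ AddSubmonoid.closure D.S := Iff.rfl

lemma negRoot (D : RootSystemData V) {α : V} (h : α ∈ D.Φ) : -α ∈ D.Φ := by
  have hne : (inner ℝ α α : ℝ) ≠ 0 := inner_self_ne_zero.mpr (D.ne_zero α h)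
  have h2 : (2 * (inner ℝ α α : ℝ) / (inner ℝ α α : ℝ)) = 2 := by field_simp
  have hmem := D.reflect_mem α h α h
  rw [h2] at hmem
  have heq : α - (2:ℝ) • α = -α := by rw [two_smul]; abel
  rwa [heq] at hmem

lemma rootSub (D : RootSystemData V) {α β : V} (hα : α ∈ D.Φ) (hβ : β ∈ D.Φ)
    (hip : 0 < (inner ℝ α β : ℝ)) (hne : α ≠ β) : α - β ∈ D.Φ := by
  obtain ⟨m, hm⟩ := D.crystal β hβ α hα
  obtain ⟨n, hn⟩ := D.crystal α hα β hβ
  have hαα : (0:ℝ) < inner ℝ α α := inner_self_pos' (D.ne_zero α hα)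
  have hββ : (0:ℝ) < inner ℝ β β := inner_self_pos' (D.ne_zero β hβ)
  have hba : (inner ℝ β α : ℝ) = inner ℝ α β := real_inner_comm α β
  have hm1 : 1 ≤ m := by
    have hm0 : (0:ℝ) < (m:ℝ) := by
      rw [← hm]; exact div_pos (by linarith) hββ
    exact_mod_cast hm0
  have hn1 : 1 ≤ n := by
    have hn0 : (0:ℝ) < (n:ℝ) := by
      rw [← hn, hba]; exact div_pos (by linarith) hαα
    exact_mod_cast hn0
  by_cases hm1' : m = 1
  · have hmem := D.reflect_mem β hβ α hα
    rw [hm, hm1'] at hmem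
    norm_num at hmem
    exact hmem
  by_cases hn1' : n = 1
  · have hmem := D.reflect_mem α hα β hβ
    rw [hn, hn1'] at hmem
    norm_num at hmem
    have := D.negRoot hmem
    rwa [neg_sub] at this
  have hm2 : 2 ≤ m := by omega
  have hn2 : 2 ≤ n := by omega
  have hcs := real_inner_mul_inner_self_le α β
  have hprod : (m:ℝ) * n = 4 * (inner ℝ α β:ℝ)^2 / ((inner ℝ α α:ℝ) * (inner ℝ β β:ℝ)) := by
    rw [← hm, ← hn, hba]
    field_simp
    ring
  have hle : (m:ℝ) * n ≤ 4 := by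
    rw [hprod, div_le_iff₀ (by positivity)]
    nlinarith [hcs]
  have hmn4 : m * n = 4 := by
    have h1 : m * n ≤ 4 := by exact_mod_cast hle
    nlinarith
  have heq : (inner ℝ α β:ℝ)^2 = (inner ℝ α α:ℝ) * (inner ℝ β β:ℝ) := by
    have h4 : (m:ℝ) * n = 4 := by exact_mod_cast hmn4
    rw [hprod] at h4
    field_simp at h4
    linarith
  set r : ℝ := (inner ℝ α β:ℝ) / (inner ℝ α α:ℝ) with hr
  have hw : (inner ℝ (β - r • α) (β - r • α) : ℝ) = 0 := by
    have hexp : (inner ℝ (β - r • α) (β - r • α) : ℝ)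
        = (inner ℝ β β : ℝ) - 2 * r * (inner ℝ α β : ℝ) + r^2 * (inner ℝ α α : ℝ) := by
      simp only [inner_sub_left, inner_sub_right, real_inner_smul_left, real_inner_smul_right, hba]
      ring
    rw [hexp, hr]
    field_simp
    nlinarith [heq]
  have hw0 : β - r • α = 0 := inner_self_eq_zero.mp hw
  have hβr : β = r • α := by rwa [sub_eq_zero] at hw0
  have hrpos : 0 < r := div_pos hip hαα
  rcases D.reduced α hα r (by rw [← hβr]; exact hβ) with h1 | h1
  · exact absurd (by rw [hβr, h1, one_smul] : β = α) (Ne.symm hne)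
  · rw [h1] at hrpos; norm_num at hrpos

lemma posOrNeg (D : RootSystemData V) {φ : V} (h : φ ∈ D.Φ) :
    φ ∈ D.pos ∨ -φ ∈ D.pos := by
  rcases D.decomp φ h with h1 | h1
  · exact Or.inl ⟨h, h1⟩
  · exact Or.inr ⟨D.negRoot h, h1⟩

lemma exists_ell (D : RootSystemData V) : ∃ ℓ : V →ₗ[ℝ] ℝ, ∀ s ∈ D.S, ℓ s = 1 := by
  let B := Module.Basis.span D.S_indep
  let f : Submodule.span ℝ (Set.range ((↑) : D.S → V)) →ₗ[ℝ] ℝ := B.constr ℝ (fun _ => (1:ℝ))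
  obtain ⟨g, hg⟩ := f.exists_extend
  refine ⟨g, fun s hs => ?_⟩
  have hmem : s ∈ Submodule.span ℝ (Set.range ((↑) : D.S → V)) :=
    Submodule.subset_span ⟨⟨s, hs⟩, rfl⟩
  have h1 : g s = f ⟨s, hmem⟩ := by
    have := LinearMap.congr_fun hg ⟨s, hmem⟩
    simpa using this
  rw [h1]
  have hBs : (⟨s, hmem⟩ : Submodule.span ℝ (Set.range ((↑) : D.S → V))) = B ⟨s, hs⟩ := by
    apply Subtype.ext
    rw [Module.Basis.span_apply]
  rw [hBs]
  simp [f, Module.Basis.constr_basis]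


section Ell

variable (D : RootSystemData V) (ℓ : V →ₗ[ℝ] ℝ)

lemma ell_list_sum (hℓ : ∀ s ∈ D.S, ℓ s = 1) : ∀ L : List V, (∀ x ∈ L, x ∈ D.S) → ℓ L.sum = L.length := by
  intro L
  induction L with
  | nil => simp
  | cons a t ih =>
    intro hmem
    have ha : a ∈ D.S := hmem a (by simp)
    have ht : ∀ x ∈ t, x ∈ D.S := fun x hx => hmem x (by simp [hx])
    rw [List.sum_cons, map_add, hℓ a ha, ih ht, List.length_cons]
    push_cast
    ring

lemma ell_nonneg (hℓ : ∀ s ∈ D.S, ℓ s = 1) {v : V} (hv : v ∈ AddSubmonoid.closure D.S) : 0 ≤ ℓ v := by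
  obtain ⟨L, hL, hsum⟩ := AddSubmonoid.exists_list_of_mem_closure hv
  rw [← hsum, ell_list_sum D ℓ hℓ L hL]
  positivity

lemma ell_one_le (hℓ : ∀ s ∈ D.S, ℓ s = 1) {v : V} (hv : v ∈ AddSubmonoid.closure D.S) (hv0 : v ≠ 0) : 1 ≤ ℓ v := by
  obtain ⟨L, hL, hsum⟩ := AddSubmonoid.exists_list_of_mem_closure hv
  rw [← hsum, ell_list_sum D ℓ hℓ L hL]
  cases L with
  | nil => simp at hsum; exact absurd hsum.symm hv0
  | cons a t =>
    rw [List.length_cons]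
    push_cast
    linarith [Nat.cast_nonneg (α := ℝ) t.length]

lemma ell_pos_root (hℓ : ∀ s ∈ D.S, ℓ s = 1) {α : V} (hα : α ∈ D.pos) : 1 ≤ ℓ α :=
  ell_one_le D ℓ hℓ hα.2 (D.ne_zero α hα.1)

end Ell

lemma inner_list_sum (v : V) : ∀ L : List V,
    (inner ℝ L.sum v : ℝ) = (L.map (fun x => (inner ℝ x v : ℝ))).sum := by
  intro L
  induction L with
  | nil => simp
  | cons a t ih => simp [inner_add_left, ih]

section IbarBasic

variable (D : RootSystemData V) {k : ℕ} {I : ℕ → Set V}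

lemma Ibar_of_le {i : ℕ} (hi : i ≤ k) : D.Ibar k I i = I i := by
  unfold Ibar; rw [if_pos hi]

lemma Ibar_top : D.Ibar k I (k+1)
    = (⋃ (p : ℕ × ℕ) (_ : p.1 + p.2 = k + 1), (I p.1 + I p.2) ∩ D.pos) ∪ I k ∪ D.S := by
  unfold Ibar; rw [if_neg (by omega)]

lemma mem_Ibar_top_of_pair {a b : ℕ} (hab : a + b = k + 1) {x : V}
    (hx : x ∈ (I a + I b) ∩ D.pos) : x ∈ D.Ibar k I (k+1) := by
  rw [Ibar_top]
  exact Or.inl (Or.inl (Set.mem_iUnion.mpr ⟨(a,b), Set.mem_iUnion.mpr ⟨hab, hx⟩⟩))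

lemma Ibar_mono (h : D.IsGeomChain k I) {i j : ℕ} (hij : i ≤ j) (hj : j ≤ k + 1) :
    D.Ibar k I i ⊆ D.Ibar k I j := by
  by_cases hjk : j ≤ k
  · rw [Ibar_of_le D (le_trans hij hjk), Ibar_of_le D hjk]
    exact h.mono i j hij hjk
  · have hj1 : j = k + 1 := by omega
    subst hj1
    by_cases hik : i ≤ k
    · rw [Ibar_of_le D hik, Ibar_top]
      intro x hx
      exact Or.inl (Or.inr (h.mono i k hik le_rfl hx))
    · have : i = k + 1 := by omega
      subst this; exact subset_rfl

lemma notIbar_min {x : V} {m : ℕ} (hm : m ≤ k + 1) (hx : x ∉ D.Ibar k I m) :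
    x ∉ I (min m k) := by
  by_cases hmk : m ≤ k
  · rw [min_eq_left hmk]; rwa [Ibar_of_le D hmk] at hx
  · have hm1 : m = k + 1 := by omega
    subst hm1
    rw [min_eq_right (by omega)]
    intro hmem
    exact hx (by rw [Ibar_top]; exact Or.inl (Or.inr hmem))

lemma notIbar_sum {x : V} (hx : x ∉ D.Ibar k I (k+1)) :
    ∀ a b : ℕ, a + b = k + 1 → x ∉ (I a + I b) ∩ D.pos := by
  intro a b hab hmem
  exact hx (mem_Ibar_top_of_pair D hab hmem)

lemma Ibar_top_subset_pos (h : D.IsGeomChain k I) (hk : 1 ≤ k) : D.Ibar k I (k+1) ⊆ D.pos := by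
  rw [Ibar_top D]
  rintro x ((hx | hx) | hx)
  · simp only [Set.mem_iUnion] at hx
    obtain ⟨p, hp, hmem⟩ := hx
    exact hmem.2
  · exact (h.ideal k hk le_rfl).1 hx
  · exact ⟨D.S_sub hx, AddSubmonoid.subset_closure hx⟩

end IbarBasic


lemma list_sum_nonpos : ∀ L : List ℝ, (∀ x ∈ L, x ≤ 0) → L.sum ≤ 0 := by
  intro L
  induction L with
  | nil => simp
  | cons a t ih =>
    intro hmem
    rw [List.sum_cons]
    have h1 := hmem a (by simp)
    have h2 := ih (fun x hx => hmem x (by simp [hx]))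
    linarith

lemma topStep (D : RootSystemData V) (ℓ : V →ₗ[ℝ] ℝ) (hℓ : ∀ s ∈ D.S, ℓ s = 1) :
    ∀ n : ℕ, ∀ L : List V, L.length = n → L ≠ [] → (∀ x ∈ L, x ∈ D.S) →
    ∀ α β : V, α ∈ D.pos → β ∈ D.pos → α = β + L.sum →
    ∃ s ∈ D.S, ∃ L' : List V, (∀ x ∈ L', x ∈ D.S) ∧ L'.length + 1 = L.length ∧
      α - s ∈ D.pos ∧ α - s = β + L'.sum := by
  intro n
  induction n using Nat.strong_induction_on with
  | _ n ih =>
  intro L hlen hne hLS α β hα hβ hsum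
  classical
  have hμcl : L.sum ∈ AddSubmonoid.closure D.S :=
    AddSubmonoid.list_sum_mem _ (fun x hx => AddSubmonoid.subset_closure (hLS x hx))
  have hlen1 : 1 ≤ L.length := List.length_pos_iff.mpr hne
  have hμℓ : ℓ L.sum = L.length := ell_list_sum D ℓ hℓ L hLS
  have hμ0 : L.sum ≠ 0 := by
    intro h0
    rw [h0, map_zero] at hμℓ
    have : L.length = 0 := by exact_mod_cast hμℓ.symm
    omega
  have hℓβ : 1 ≤ ℓ β := ell_pos_root D ℓ hℓ hβ
  have hℓα2 : 2 ≤ ℓ α := by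
    have h1 : ℓ α = ℓ β + L.length := by rw [hsum, map_add, hμℓ]
    have h2 : (1:ℝ) ≤ L.length := by exact_mod_cast hlen1
    linarith
  have hμμ : 0 < (inner ℝ L.sum L.sum : ℝ) := inner_self_pos' hμ0
  have key : 0 < (inner ℝ L.sum α : ℝ) ∨ (inner ℝ L.sum β : ℝ) < 0 := by
    have hd : (inner ℝ L.sum α : ℝ) - inner ℝ L.sum β = inner ℝ L.sum L.sum := by
      rw [hsum, inner_add_right]; ring
    by_contra hcon
    push_neg at hcon
    obtain ⟨h1, h2⟩ := hcon
    linarith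
  rcases key with hposα | hnegβ
  · have hex : ∃ x ∈ L, 0 < (inner ℝ x α : ℝ) := by
      by_contra hcon
      push_neg at hcon
      have hle : (L.map (fun x => (inner ℝ x α : ℝ))).sum ≤ 0 := by
        apply list_sum_nonpos
        intro y hy
        obtain ⟨x, hx, rfl⟩ := List.mem_map.mp hy
        exact hcon x hx
      rw [← inner_list_sum] at hle
      linarith
    obtain ⟨x, hxL, hxα⟩ := hex
    have hxS := hLS x hxL
    have hxΦ := D.S_sub hxS
    have hℓx : ℓ x = 1 := hℓ x hxS
    have hαx : α ≠ x := by intro hax; rw [hax, hℓx] at hℓα2; linarith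
    have hsub : α - x ∈ D.Φ := D.rootSub hα.1 hxΦ (by rw [real_inner_comm]; exact hxα) hαx
    have hpos : α - x ∈ D.pos := by
      rcases D.posOrNeg hsub with hp | hp
      · exact hp
      · exfalso
        have h1 : 1 ≤ ℓ (-(α - x)) := ell_pos_root D ℓ hℓ hp
        rw [map_neg, map_sub, hℓx] at h1
        linarith
    have hperm : L.Perm (x :: L.erase x) := List.perm_cons_erase hxL
    refine ⟨x, hxS, L.erase x, fun y hy => hLS y (List.erase_subset hy), ?_, hpos, ?_⟩
    · have := List.length_erase_of_mem hxL; omega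
    · have hsum2 : L.sum = x + (L.erase x).sum := by rw [hperm.sum_eq, List.sum_cons]
      rw [hsum, hsum2]; abel
  · have hex : ∃ x ∈ L, (inner ℝ x β : ℝ) < 0 := by
      by_contra hcon
      push_neg at hcon
      have hge : 0 ≤ (L.map (fun x => (inner ℝ x β : ℝ))).sum := by
        apply List.sum_nonneg
        intro y hy
        obtain ⟨x, hx, rfl⟩ := List.mem_map.mp hy
        exact hcon x hx
      rw [← inner_list_sum] at hge
      linarith
    obtain ⟨x, hxL, hxβ⟩ := hex
    have hxS := hLS x hxL
    have hxΦ := D.S_sub hxS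
    have hℓx : ℓ x = 1 := hℓ x hxS
    have hβx : β ≠ -x := by
      intro hbx
      have h1 := ell_pos_root D ℓ hℓ hβ
      rw [hbx, map_neg, hℓx] at h1
      linarith
    have hsub : β - (-x) ∈ D.Φ := by
      refine D.rootSub hβ.1 (D.negRoot hxΦ) ?_ hβx
      rw [inner_neg_right, ← real_inner_comm β x]
      linarith
    rw [sub_neg_eq_add] at hsub
    have hβxpos : β + x ∈ D.pos :=
      ⟨hsub, AddSubmonoid.add_mem _ hβ.2 (AddSubmonoid.subset_closure hxS)⟩
    have hperm : L.Perm (x :: L.erase x) := List.perm_cons_erase hxL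
    have hsum2 : L.sum = x + (L.erase x).sum := by rw [hperm.sum_eq, List.sum_cons]
    have hsum3 : α = (β + x) + (L.erase x).sum := by rw [hsum, hsum2]; abel
    by_cases hnil : L.erase x = []
    · have hα2 : α = β + x := by rw [hsum3, hnil]; simp
      refine ⟨x, hxS, [], by simp, ?_, ?_, ?_⟩
      · have hle := List.length_erase_of_mem hxL
        rw [hnil] at hle
        simp at hle ⊢
        omega
      · have : α - x = β := by rw [hα2]; abel
        rw [this]; exact hβ
      · rw [hα2]; simp
    · have hlt : (L.erase x).length < n := by
        have := List.length_erase_of_mem hxL; omega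
      obtain ⟨s, hsS, L'', hL''S, hL''len, hspos, hseq⟩ :=
        ih (L.erase x).length hlt (L.erase x) rfl hnil
          (fun y hy => hLS y (List.erase_subset hy)) α (β + x) hα hβxpos hsum3
      refine ⟨s, hsS, x :: L'', ?_, ?_, hspos, ?_⟩
      · intro y hy
        rcases List.mem_cons.mp hy with rfl | hy'
        · exact hxS
        · exact hL''S y hy'
      · have := List.length_erase_of_mem hxL
        simp only [List.length_cons] at hL''len ⊢
        omega
      · rw [hseq, List.sum_cons]; abel


lemma helper5 (D : RootSystemData V) {k : ℕ} {I : ℕ → Set V} (h : D.IsGeomChain k I)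
    (ℓ : V →ₗ[ℝ] ℝ) (hℓ : ∀ s ∈ D.S, ℓ s = 1)
    {a b : ℕ} (ha : 1 ≤ a) (ha' : a ≤ k) (hb : 1 ≤ b) (hb' : b ≤ k)
    {δ ε s α : V} (hδ : δ ∈ I a) (hε : ε ∈ I b) (hs : s ∈ D.S)
    (hαeq : α = δ + ε) (hβpos : α - s ∈ D.pos) (hεs : ε ≠ s)
    (hip : 0 < (inner ℝ δ (α - s) : ℝ)) :
    α - s ∈ (I a + I b) ∩ D.pos := by
  have hδpos : δ ∈ D.pos := (h.ideal a ha ha').1 hδ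
  have hεpos : ε ∈ D.pos := (h.ideal b hb hb').1 hε
  have hβδ : α - s ≠ δ := by
    intro hbd
    apply hεs
    have h1 : δ + s = α := by rw [← hbd]; abel
    have h2 : δ + ε = δ + s := by rw [← hαeq, h1]
    exact add_left_cancel h2
  have hφΦ : (α - s) - δ ∈ D.Φ :=
    D.rootSub hβpos.1 hδpos.1 (by rw [real_inner_comm]; exact hip) hβδ
  have hφeq : (α - s) - δ = ε - s := by rw [hαeq]; abel
  have hφpos : (α - s) - δ ∈ D.pos := by
    rcases D.posOrNeg hφΦ with hp | hp
    · exact hp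
    · exfalso
      have h1 : 1 ≤ ℓ (-((α - s) - δ)) := ell_pos_root D ℓ hℓ hp
      have h2 : 1 ≤ ℓ ε := ell_pos_root D ℓ hℓ hεpos
      rw [hφeq, map_neg, map_sub, hℓ s hs] at h1
      linarith
  have hφI : (α - s) - δ ∈ I b := by
    refine (h.ideal b hb hb').2 ε hε ((α - s) - δ) hφpos ?_
    show ε - ((α - s) - δ) ∈ AddSubmonoid.closure D.S
    have he : ε - ((α - s) - δ) = s := by rw [hφeq]; abel
    rw [he]
    exact AddSubmonoid.subset_closure hs
  refine ⟨?_, hβpos⟩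
  have he2 : α - s = δ + ((α - s) - δ) := by abel
  rw [he2]
  exact Set.add_mem_add hδ hφI

lemma singleStep (D : RootSystemData V) {k : ℕ} {I : ℕ → Set V} (h : D.IsGeomChain k I)
    (hk : 1 ≤ k) (ℓ : V →ₗ[ℝ] ℝ) (hℓ : ∀ s ∈ D.S, ℓ s = 1)
    {α s : V} (hα : α ∈ D.Ibar k I (k+1)) (hs : s ∈ D.S) (hβpos : α - s ∈ D.pos) :
    α - s ∈ D.Ibar k I (k+1) := by
  rw [Ibar_top] at hα
  rcases hα with (hU | hIk) | hS
  · simp only [Set.mem_iUnion] at hU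
    obtain ⟨p, hp, hadd, hαpos⟩ := hU
    obtain ⟨δ, hδ, ε, hε, hde⟩ := Set.mem_add.mp hadd
    rcases Nat.eq_zero_or_pos p.1 with h0 | ha
    · rw [h0, h.zero] at hδ; exact absurd hδ (Set.notMem_empty δ)
    rcases Nat.eq_zero_or_pos p.2 with h0 | hb
    · rw [h0, h.zero] at hε; exact absurd hε (Set.notMem_empty ε)
    have ha' : p.1 ≤ k := by omega
    have hb' : p.2 ≤ k := by omega
    have hδpos := (h.ideal p.1 ha ha').1 hδ
    have hεpos := (h.ideal p.2 hb hb').1 hε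
    by_cases hεs : ε = s
    · have he : α - s = δ := by rw [← hde, hεs]; abel
      rw [he]
      exact Ibar_mono D h (show p.1 ≤ k+1 by omega) le_rfl (by rwa [Ibar_of_le D ha'])
    by_cases hδs : δ = s
    · have he : α - s = ε := by rw [← hde, hδs]; abel
      rw [he]
      exact Ibar_mono D h (show p.2 ≤ k+1 by omega) le_rfl (by rwa [Ibar_of_le D hb'])
    by_cases h1 : 0 < (inner ℝ δ s : ℝ)
    · have hsub : δ - s ∈ D.Φ := D.rootSub hδpos.1 (D.S_sub hs) h1 hδs
      have hdspos : δ - s ∈ D.pos := by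
        rcases D.posOrNeg hsub with hp' | hp'
        · exact hp'
        · exfalso
          have hx : 1 ≤ ℓ (-(δ - s)) := ell_pos_root D ℓ hℓ hp'
          have hy : 1 ≤ ℓ δ := ell_pos_root D ℓ hℓ hδpos
          rw [map_neg, map_sub, hℓ s hs] at hx
          linarith
      have hdsI : δ - s ∈ I p.1 := by
        refine (h.ideal p.1 ha ha').2 δ hδ (δ - s) hdspos ?_
        show δ - (δ - s) ∈ AddSubmonoid.closure D.S
        have he : δ - (δ - s) = s := by abel
        rw [he]; exact AddSubmonoid.subset_closure hs
      apply mem_Ibar_top_of_pair D hp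
      refine ⟨?_, hβpos⟩
      have he : α - s = (δ - s) + ε := by rw [← hde]; abel
      rw [he]; exact Set.add_mem_add hdsI hε
    by_cases h2 : 0 < (inner ℝ ε s : ℝ)
    · have hsub : ε - s ∈ D.Φ := D.rootSub hεpos.1 (D.S_sub hs) h2 hεs
      have hdspos : ε - s ∈ D.pos := by
        rcases D.posOrNeg hsub with hp' | hp'
        · exact hp'
        · exfalso
          have hx : 1 ≤ ℓ (-(ε - s)) := ell_pos_root D ℓ hℓ hp'
          have hy : 1 ≤ ℓ ε := ell_pos_root D ℓ hℓ hεpos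
          rw [map_neg, map_sub, hℓ s hs] at hx
          linarith
      have hdsI : ε - s ∈ I p.2 := by
        refine (h.ideal p.2 hb hb').2 ε hε (ε - s) hdspos ?_
        show ε - (ε - s) ∈ AddSubmonoid.closure D.S
        have he : ε - (ε - s) = s := by abel
        rw [he]; exact AddSubmonoid.subset_closure hs
      apply mem_Ibar_top_of_pair D hp
      refine ⟨?_, hβpos⟩
      have he : α - s = δ + (ε - s) := by rw [← hde]; abel
      rw [he]; exact Set.add_mem_add hδ hdsI
    push_neg at h1 h2
    have hαne : α ≠ 0 := D.ne_zero α hαpos.1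
    have hip : 0 < (inner ℝ α (α - s) : ℝ) := by
      rw [inner_sub_right]
      have hself := inner_self_pos' hαne
      have hsα : (inner ℝ α s : ℝ) ≤ 0 := by
        rw [← hde, inner_add_left]
        linarith
      linarith
    have hsplit : 0 < (inner ℝ δ (α - s) : ℝ) ∨ 0 < (inner ℝ ε (α - s) : ℝ) := by
      by_contra hcon
      push_neg at hcon
      have he : (inner ℝ α (α - s) : ℝ) = inner ℝ δ (α - s) + inner ℝ ε (α - s) := by
        rw [← hde, inner_add_left]
      linarith [hcon.1, hcon.2]
    rcases hsplit with hip1 | hip2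
    · exact mem_Ibar_top_of_pair D hp
        (helper5 D h ℓ hℓ ha ha' hb hb' hδ hε hs hde.symm hβpos hεs hip1)
    · have hab2 : p.2 + p.1 = k + 1 := by omega
      exact mem_Ibar_top_of_pair D hab2
        (helper5 D h ℓ hℓ hb hb' ha ha' hε hδ hs (by rw [← hde, add_comm]) hβpos hδs hip2)
  · have hmem : α - s ∈ I k := by
      refine (h.ideal k hk le_rfl).2 α hIk (α - s) hβpos ?_
      show α - (α - s) ∈ AddSubmonoid.closure D.S
      have he : α - (α - s) = s := by abel
      rw [he]; exact AddSubmonoid.subset_closure hs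
    rw [Ibar_top]
    exact Or.inl (Or.inr hmem)
  · exfalso
    have h1 : ℓ α = 1 := hℓ α hS
    have h2 : 1 ≤ ℓ (α - s) := ell_pos_root D ℓ hℓ hβpos
    rw [map_sub, h1, hℓ s hs] at h2
    linarith

lemma downStep (D : RootSystemData V) {k : ℕ} {I : ℕ → Set V} (h : D.IsGeomChain k I)
    (hk : 1 ≤ k) (ℓ : V →ₗ[ℝ] ℝ) (hℓ : ∀ s ∈ D.S, ℓ s = 1) :
    ∀ n : ℕ, ∀ L : List V, L.length = n → (∀ x ∈ L, x ∈ D.S) →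
    ∀ α β : V, α ∈ D.Ibar k I (k+1) → β ∈ D.pos →
    α = β + L.sum → β ∈ D.Ibar k I (k+1) := by
  intro n
  induction n with
  | zero =>
    intro L hlen _ α β hα hβ hsum
    rw [List.length_eq_zero_iff.mp hlen] at hsum
    simp at hsum
    exact hsum ▸ hα
  | succ n ih =>
    intro L hlen hLS α β hα hβ hsum
    have hne : L ≠ [] := by intro h0; rw [h0] at hlen; simp at hlen
    have hαpos : α ∈ D.pos := Ibar_top_subset_pos D h hk hα
    obtain ⟨s, hsS, L', hL'S, hL'len, hspos, hseq⟩ :=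
      topStep D ℓ hℓ L.length L rfl hne hLS α β hαpos hβ hsum
    exact ih L' (by omega) hL'S (α - s) β (singleStep D h hk ℓ hℓ hα hsS hspos) hβ hseq

lemma Ibar_top_ideal (D : RootSystemData V) {k : ℕ} {I : ℕ → Set V} (h : D.IsGeomChain k I)
    (hk : 1 ≤ k) (ℓ : V →ₗ[ℝ] ℝ) (hℓ : ∀ s ∈ D.S, ℓ s = 1) :
    D.IsIdeal (D.Ibar k I (k+1)) := by
  refine ⟨Ibar_top_subset_pos D h hk, ?_⟩
  intro α hα β hβ hrle
  obtain ⟨L, hLS, hLsum⟩ := AddSubmonoid.exists_list_of_mem_closure hrle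
  exact downStep D h hk ℓ hℓ L.length L rfl hLS α β hα hβ (by rw [hLsum]; abel)


lemma coreB (D : RootSystemData V) {k : ℕ} {I : ℕ → Set V} (h : D.IsGeomChain k I)
    {i j a b : ℕ} {β γ δ ε : V}
    (hij : i + j = k + 1) (hab : a + b = k + 1)
    (ha : 1 ≤ a) (ha' : a ≤ k) (hb : 1 ≤ b) (hb' : b ≤ k)
    (hβ : β ∈ D.pos) (hγ : γ ∈ D.pos)
    (hβI : β ∉ D.Ibar k I i) (hγI : γ ∉ D.Ibar k I j)
    (hδ : δ ∈ I a) (hε : ε ∈ I b)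
    (hsum : β + γ = δ + ε) (hip : 0 < (inner ℝ β δ : ℝ)) : False := by
  have hi1 : i ≤ k + 1 := by omega
  have hj1 : j ≤ k + 1 := by omega
  have hδpos : δ ∈ D.pos := (h.ideal a ha ha').1 hδ
  have hεpos : ε ∈ D.pos := (h.ideal b hb hb').1 hε
  have hβmin : β ∉ I (min i k) := notIbar_min D hi1 hβI
  have hγmin : γ ∉ I (min j k) := notIbar_min D hj1 hγI
  by_cases hbd : β = δ
  · have hge : γ = ε := by
      apply add_left_cancel (a := β)
      rw [hsum, hbd]
    have h1 : min i k < a := by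
      by_contra hle
      push_neg at hle
      have hβa : β ∈ I a := by rw [hbd]; exact hδ
      exact hβmin (h.mono a (min i k) hle (min_le_right i k) hβa)
    have h2 : min j k < b := by
      by_contra hle
      push_neg at hle
      have hγb : γ ∈ I b := by rw [hge]; exact hε
      exact hγmin (h.mono b (min j k) hle (min_le_right j k) hγb)
    omega
  · have hφΦ : β - δ ∈ D.Φ := D.rootSub hβ.1 hδpos.1 hip hbd
    rcases D.posOrNeg hφΦ with hφ | hψ
    · have hεeq : ε = γ + (β - δ) := by
        apply add_left_cancel (a := δ)
        rw [← hsum]; abel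
      have hγJ : γ ∈ D.Jf k I j := ⟨hγ, hγmin⟩
      have hφJ0 : β - δ ∈ D.Jf k I 0 := by
        refine ⟨hφ, ?_⟩
        rw [Nat.zero_min, h.zero]
        exact Set.notMem_empty _
      have hmemJ : ε ∈ D.Jf k I j + D.Jf k I 0 := by
        rw [hεeq]; exact Set.add_mem_add hγJ hφJ0
      have hstep1 := (h.geomJ j 0 ⟨hmemJ, hεpos⟩).2
      simp only [Nat.add_zero] at hstep1
      have hjb : min j k < b := by
        by_contra hle
        push_neg at hle
        exact hstep1 (h.mono b (min j k) hle (min_le_right j k) hε)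
      have hjk : j ≤ k := by
        by_contra hgt
        push_neg at hgt
        rw [min_eq_right (by omega : k ≤ j)] at hjb
        omega
      rw [min_eq_left hjk] at hjb
      have hai : a < i := by omega
      set c := i - a with hc
      have hc1 : 1 ≤ c := by omega
      have hck : c ≤ k := by omega
      have hφc : β - δ ∉ I c := by
        intro hmem
        by_cases hik : i ≤ k
        · have hβi : β ∈ I (a + c) := by
            refine h.geomI a c (by omega) ⟨?_, hβ⟩
            have he : β = δ + (β - δ) := by abel
            rw [he]; exact Set.add_mem_add hδ hmem
          rw [min_eq_left hik] at hβmin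
          have hac : a + c = i := by omega
          rw [hac] at hβi
          exact hβmin hβi
        · have hik1 : i = k + 1 := by omega
          have hcb : c = b := by omega
          rw [hik1] at hβI
          refine notIbar_sum D hβI a b hab ⟨?_, hβ⟩
          have he : β = δ + (β - δ) := by abel
          rw [he]; exact Set.add_mem_add hδ (hcb ▸ hmem)
      have hφJc : β - δ ∈ D.Jf k I c := ⟨hφ, by rwa [min_eq_left hck]⟩
      have hmemJ2 : ε ∈ D.Jf k I j + D.Jf k I c := by
        rw [hεeq]; exact Set.add_mem_add hγJ hφJc
      have hstep3 := (h.geomJ j c ⟨hmemJ2, hεpos⟩).2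
      have hjc : j + c = b := by omega
      rw [hjc, min_eq_left hb'] at hstep3
      exact hstep3 hε
    · rw [neg_sub] at hψ
      have hγeq : γ = ε + (δ - β) := by
        apply add_left_cancel (a := β)
        rw [hsum]; abel
      have hδeq : δ = β + (δ - β) := by abel
      have hβJ : β ∈ D.Jf k I i := ⟨hβ, hβmin⟩
      have hψJ0 : δ - β ∈ D.Jf k I 0 := by
        refine ⟨hψ, ?_⟩
        rw [Nat.zero_min, h.zero]
        exact Set.notMem_empty _
      have hmemJ : δ ∈ D.Jf k I i + D.Jf k I 0 := by
        have := Set.add_mem_add hβJ hψJ0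
        rwa [← hδeq] at this
      have hstep1 := (h.geomJ i 0 ⟨hmemJ, hδpos⟩).2
      simp only [Nat.add_zero] at hstep1
      have hia : min i k < a := by
        by_contra hle
        push_neg at hle
        exact hstep1 (h.mono a (min i k) hle (min_le_right i k) hδ)
      have hik : i ≤ k := by
        by_contra hgt
        push_neg at hgt
        rw [min_eq_right (by omega : k ≤ i)] at hia
        omega
      rw [min_eq_left hik] at hia
      have hbj : b < j := by omega
      set d := j - b with hd
      have hd1 : 1 ≤ d := by omega
      have hdk : d ≤ k := by omega
      have hψd : δ - β ∉ I d := by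
        intro hmem
        by_cases hjk : j ≤ k
        · have hγj : γ ∈ I (b + d) := by
            refine h.geomI b d (by omega) ⟨?_, hγ⟩
            rw [hγeq]; exact Set.add_mem_add hε hmem
          rw [min_eq_left hjk] at hγmin
          have hbd' : b + d = j := by omega
          rw [hbd'] at hγj
          exact hγmin hγj
        · have hjk1 : j = k + 1 := by omega
          have hda : d = a := by omega
          rw [hjk1] at hγI
          refine notIbar_sum D hγI b a (by omega) ⟨?_, hγ⟩
          rw [hγeq]; exact Set.add_mem_add hε (hda ▸ hmem)
      have hψJd : δ - β ∈ D.Jf k I d := ⟨hψ, by rwa [min_eq_left hdk]⟩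
      have hmemJ2 : δ ∈ D.Jf k I i + D.Jf k I d := by
        have := Set.add_mem_add hβJ hψJd
        rwa [← hδeq] at this
      have hstep3 := (h.geomJ i d ⟨hmemJ2, hδpos⟩).2
      have hid : i + d = a := by omega
      rw [hid, min_eq_left ha'] at hstep3
      exact hstep3 hδ

end RootSystemData

end Aux


/-- If `𝓘 = (I₁,…,I_k)` is a geometric chain of `k` ideals, then its
extension `𝓘̲ = (I̲₁,…,I̲_{k+1})` is a positive geometric chain of `k+1` ideals. -/
theorem statement4 {V : Type*} [NormedAddCommGroup V] [InnerProductSpace ℝ V]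
    (D : RootSystemData V) (k : ℕ) (hk : 1 ≤ k) (I : ℕ → Set V)
    (h : D.IsGeomChain k I) :
    D.IsGeomChain (k + 1) (D.Ibar k I) ∧ D.IsPositiveChain (k + 1) (D.Ibar k I) := by
  classical
  obtain ⟨ℓ, hℓ⟩ := RootSystemData.exists_ell D
  have hpos_chain : D.IsPositiveChain (k + 1) (D.Ibar k I) := by
    intro s hs
    rw [RootSystemData.Ibar_top]
    exact Or.inr hs
  refine ⟨⟨?_, ?_, ?_, ?_, ?_⟩, hpos_chain⟩
  · -- zero
    rw [RootSystemData.Ibar_of_le D (by omega : 0 ≤ k)]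
    exact h.zero
  · -- ideal
    intro i h1 h2
    by_cases hik : i ≤ k
    · rw [RootSystemData.Ibar_of_le D hik]
      exact h.ideal i h1 hik
    · have hieq : i = k + 1 := by omega
      subst hieq
      exact RootSystemData.Ibar_top_ideal D h hk ℓ hℓ
  · -- mono
    intro i j hij hj
    exact RootSystemData.Ibar_mono D h hij hj
  · -- geomI
    intro i j hij x hx
    obtain ⟨hadd, hxpos⟩ := hx
    obtain ⟨u, hu, v, hv, huv⟩ := Set.mem_add.mp hadd
    by_cases hsml : i + j ≤ k
    · rw [RootSystemData.Ibar_of_le D hsml]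
      rw [RootSystemData.Ibar_of_le D (by omega : i ≤ k)] at hu
      rw [RootSystemData.Ibar_of_le D (by omega : j ≤ k)] at hv
      exact h.geomI i j hsml ⟨Set.mem_add.mpr ⟨u, hu, v, hv, huv⟩, hxpos⟩
    · have hij1 : i + j = k + 1 := by omega
      rcases Nat.eq_zero_or_pos i with h0 | hi1
      · rw [h0, RootSystemData.Ibar_of_le D (by omega : 0 ≤ k), h.zero] at hu
        exact absurd hu (Set.notMem_empty u)
      rcases Nat.eq_zero_or_pos j with h0 | hj1
      · rw [h0, RootSystemData.Ibar_of_le D (by omega : 0 ≤ k), h.zero] at hv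
        exact absurd hv (Set.notMem_empty v)
      rw [RootSystemData.Ibar_of_le D (by omega : i ≤ k)] at hu
      rw [RootSystemData.Ibar_of_le D (by omega : j ≤ k)] at hv
      rw [hij1]
      exact RootSystemData.mem_Ibar_top_of_pair D hij1
        ⟨Set.mem_add.mpr ⟨u, hu, v, hv, huv⟩, hxpos⟩
  · -- geomJ
    intro i j x hx
    obtain ⟨hadd, hxpos⟩ := hx
    obtain ⟨β, hβ, γ, hγ, hbg⟩ := Set.mem_add.mp hadd
    obtain ⟨hβpos, hβI⟩ := hβ
    obtain ⟨hγpos, hγI⟩ := hγ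
    refine ⟨hxpos, ?_⟩
    by_cases hsml : i + j ≤ k
    · have hik : i ≤ k := by omega
      have hjk : j ≤ k := by omega
      have hβJ : β ∈ D.Jf k I i := by
        refine ⟨hβpos, ?_⟩
        rw [min_eq_left hik]
        rw [min_eq_left (by omega : i ≤ k+1), RootSystemData.Ibar_of_le D hik] at hβI
        exact hβI
      have hγJ : γ ∈ D.Jf k I j := by
        refine ⟨hγpos, ?_⟩
        rw [min_eq_left hjk]
        rw [min_eq_left (by omega : j ≤ k+1), RootSystemData.Ibar_of_le D hjk] at hγI
        exact hγI
      have hres := (h.geomJ i j ⟨(by rw [← hbg]; exact Set.add_mem_add hβJ hγJ), hxpos⟩).2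
      rw [min_eq_left (by omega : i + j ≤ k)] at hres
      rw [min_eq_left (by omega : i + j ≤ k+1), RootSystemData.Ibar_of_le D hsml]
      exact hres
    · rw [min_eq_right (by omega : k + 1 ≤ i + j)]
      set q := min j (k+1) with hq
      set p := k + 1 - q with hp0
      have hpq : p + q = k + 1 := by omega
      have hple : p ≤ min i (k+1) := by omega
      have hβI' : β ∉ D.Ibar k I p := fun hm =>
        hβI (RootSystemData.Ibar_mono D h hple (by omega) hm)
      have hγI' : γ ∉ D.Ibar k I q := hγI
      intro hxmem
      rw [RootSystemData.Ibar_top] at hxmem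
      rcases hxmem with (hU | hIk) | hS
      · simp only [Set.mem_iUnion] at hU
        obtain ⟨pr, hpr, haddx, hxpos'⟩ := hU
        obtain ⟨δ, hδ, ε, hε, hde⟩ := Set.mem_add.mp haddx
        rcases Nat.eq_zero_or_pos pr.1 with h0 | ha1
        · rw [h0, h.zero] at hδ; exact absurd hδ (Set.notMem_empty δ)
        rcases Nat.eq_zero_or_pos pr.2 with h0 | hb1
        · rw [h0, h.zero] at hε; exact absurd hε (Set.notMem_empty ε)
        have ha' : pr.1 ≤ k := by omega
        have hb' : pr.2 ≤ k := by omega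
        have hsum : β + γ = δ + ε := by rw [hbg, ← hde]
        have hxne : x ≠ 0 := D.ne_zero x hxpos.1
        have hxx : 0 < (inner ℝ x x : ℝ) := RootSystemData.inner_self_pos' hxne
        have hexp : (inner ℝ x x : ℝ) = inner ℝ (β + γ) (δ + ε) := by
          rw [hbg, hde]
        have hexp2 : (inner ℝ (β + γ) (δ + ε) : ℝ)
            = inner ℝ β δ + inner ℝ β ε + inner ℝ γ δ + inner ℝ γ ε := by
          rw [inner_add_left, inner_add_right, inner_add_right]
          ring
        have hcase : 0 < (inner ℝ β δ : ℝ) ∨ 0 < (inner ℝ β ε : ℝ) ∨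
            0 < (inner ℝ γ δ : ℝ) ∨ 0 < (inner ℝ γ ε : ℝ) := by
          by_contra hcon
          push_neg at hcon
          obtain ⟨c1, c2, c3, c4⟩ := hcon
          linarith
        rcases hcase with hc | hc | hc | hc
        · exact RootSystemData.coreB D h hpq hpr ha1 ha' hb1 hb'
            hβpos hγpos hβI' hγI' hδ hε hsum hc
        · exact RootSystemData.coreB D h hpq (by omega : pr.2 + pr.1 = k+1) hb1 hb' ha1 ha'
            hβpos hγpos hβI' hγI' hε hδ (by rw [hsum]; exact add_comm δ ε) hc
        · exact RootSystemData.coreB D h (by omega : q + p = k+1) hpr ha1 ha' hb1 hb'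
            hγpos hβpos hγI' hβI' hδ hε (by rw [add_comm γ β]; exact hsum) hc
        · exact RootSystemData.coreB D h (by omega : q + p = k+1)
            (by omega : pr.2 + pr.1 = k+1) hb1 hb' ha1 ha'
            hγpos hβpos hγI' hβI' hε hδ
            (by rw [add_comm γ β, hsum]; exact add_comm δ ε) hc
      · have hβJ : β ∈ D.Jf k I p := ⟨hβpos, RootSystemData.notIbar_min D (by omega) hβI'⟩
        have hγJ : γ ∈ D.Jf k I q := ⟨hγpos, RootSystemData.notIbar_min D (by omega) hγI'⟩
        have hres := (h.geomJ p q ⟨(by rw [← hbg]; exact Set.add_mem_add hβJ hγJ), hxpos⟩).2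
        have hminpq : min (p + q) k = k := by omega
        rw [hminpq] at hres
        exact hres hIk
      · have h1 : ℓ x = 1 := hℓ x hS
        have h2 : 1 ≤ ℓ β := RootSystemData.ell_pos_root D ℓ hℓ hβpos
        have h3 : 1 ≤ ℓ γ := RootSystemData.ell_pos_root D ℓ hℓ hγpos
        have h4 : ℓ x = ℓ β + ℓ γ := by rw [← hbg, map_add]
        linarith
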